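/- Let p be a positive even integer, G a graph on vertex set V, (G, 𝐩) a d-dimensional framework with 𝐩: V → ℝ^d, and ω: E(G) → ℝ a self-stress of (G,𝐩), i.e., Σ_{j: ij∈E} ω(ij)(𝐩(j)−𝐩(i))^{p−1} = 0 for all i ∈ V (where the power is taken coordinatewise). For k ∈ {1,…,d}, define ω^k(ij) := ω(ij)·((𝐩(j))_k − (𝐩(i))_k)^{p−2}. Then the k-th coordinate vector x_k ∈ ℝ^V of 𝐩, defined by (x_k)_i = (𝐩(i))_k, lies in the kernel of the weighted Laplacian L_{G,ω^k}. -/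

import Mathlib

open Finset
open scoped Classical

/-- The weighted Laplacian of a graph with adjacency relation `A` and edge weight `w`. -/
noncomputable def lapMat {V : Type*} [Fintype V] (A : V → V → Prop) (w : V → V → ℝ) :
    Matrix V V ℝ :=
  Matrix.of fun i j =>
    if i = j then ∑ k, (if A i k then w i k else 0)
    else if A i j then -(w i j) else 0

/-- For a self-stress `ω` of a `d`-dimensional framework `(G, 𝐩)` and coordinate `k`, the
`k`-th coordinate vector of `𝐩` lies in the kernel of the Laplacian weighted by the
`k`-th coordinated stress `ω^k`. -/
theorem coordinate_vector_in_kernel {V : Type*} [Fintype V] (p d : ℕ) (hp : 0 < p)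
    (hpe : Even p) (G : SimpleGraph V) (P : V → Fin d → ℝ)
    (w : V → V → ℝ) (hsymm : ∀ i j, w i j = w j i)
    (hstress : ∀ (i : V) (c : Fin d),
      ∑ j, (if G.Adj i j then w i j * (P j c - P i c) ^ (p - 1) else 0) = 0)
    (k : Fin d) :
    (lapMat G.Adj (fun i j => w i j * (P j k - P i k) ^ (p - 2))).mulVec
      (fun i => P i k) = 0 := by
  have hp2 : 2 ≤ p := by
    obtain ⟨m, rfl⟩ := hpe; omega
  set w' : V → V → ℝ := fun i j => w i j * (P j k - P i k) ^ (p - 2) with hw'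
  funext i
  have split : ∀ j, lapMat G.Adj w' i j * P j k =
      (if i = j then (∑ m, if G.Adj i m then w' i m else 0) * P i k else 0) +
      (if G.Adj i j then -(w' i j) * P j k else 0) := by
    intro j
    by_cases h : i = j
    · subst h
      simp [lapMat, G.loopless.irrefl i]
    · simp only [lapMat, Matrix.of_apply, if_neg h]
      by_cases hadj : G.Adj i j <;> simp [hadj]
  have key : ∑ j, lapMat G.Adj w' i j * P j k =
      ∑ j, (if G.Adj i j then w' i j * (P i k - P j k) else 0) := by
    rw [Finset.sum_congr rfl fun j _ => split j, Finset.sum_add_distrib,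
      Finset.sum_ite_eq (Finset.univ : Finset V) i
        (fun _ => (∑ m, if G.Adj i m then w' i m else 0) * P i k)]
    simp only [Finset.mem_univ, if_true, Finset.sum_mul]
    rw [← Finset.sum_add_distrib]
    refine Finset.sum_congr rfl fun j _ => ?_
    by_cases hadj : G.Adj i j <;> simp [hadj] <;> ring
  have key2 : ∀ j, (if G.Adj i j then w' i j * (P i k - P j k) else 0) =
      -(if G.Adj i j then w i j * (P j k - P i k) ^ (p - 1) else 0) := by
    intro j
    by_cases hadj : G.Adj i j <;> simp [hadj, hw']
    have hpow : (P j k - P i k) ^ (p - 1) = (P j k - P i k) ^ (p - 2) * (P j k - P i k) := by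
      rw [← pow_succ]
      congr 1
      omega
    rw [hpow]; ring
  show ∑ j, lapMat G.Adj w' i j * P j k = 0
  rw [key, Finset.sum_congr rfl fun j _ => key2 j, Finset.sum_neg_distrib, hstress i k, neg_zero]
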